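/- Let A : ℝᵐ → ℝⁿ be an injective linear map (so AᵀA is invertible), α > 0, and let μ, ν be probability measures on ℝⁿ with finite second moments. Write A† = (AᵀA)⁻¹Aᵀ and B_α = (AᵀA + αI)⁻¹Aᵀ. Then W₂(A†_# μ, (B_α)_# ν) ≤ ‖B_α‖ · W₂(μ, ν) + ‖B_α − A†‖ · (∫ ‖y‖² dμ(y))^{1/2}, where ‖·‖ on maps denotes the operator norm and W₂ is the 2-Wasserstein distance. (Here A†_#μ is the true unregularized reconstruction from the true data μ, and (B_α)_#ν is the α-regularized reconstruction from the perturbed data ν.) -/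

import Mathlib

open MeasureTheory Real ContinuousLinearMap
open scoped ENNReal

/-- `cpl` is a coupling of `μ` and `ν`: a measure on the product whose marginals
are `μ` and `ν`. -/
def IsCoupling {X Y : Type*} [MeasurableSpace X] [MeasurableSpace Y]
    (μ : Measure X) (ν : Measure Y) (cpl : Measure (X × Y)) : Prop :=
  cpl.map Prod.fst = μ ∧ cpl.map Prod.snd = ν

/-- The 2-Wasserstein distance, expressed as the square root of the infimal squared
transport cost over couplings. -/
noncomputable def W2 {E : Type*} [MeasurableSpace E] [NormedAddCommGroup E]
    (μ ν : Measure E) : ℝ≥0∞ :=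
  (⨅ (cpl : Measure (E × E)) (_ : IsCoupling μ ν cpl),
    ∫⁻ z, ENNReal.ofReal (‖z.1 - z.2‖ ^ 2) ∂cpl) ^ (1 / 2 : ℝ)

lemma ofReal_sq (r : ℝ) (hr : 0 ≤ r) :
    ENNReal.ofReal (r ^ 2) = ENNReal.ofReal r ^ (2 : ℝ) := by
  rw [ENNReal.ofReal_pow hr]
  rw [show (2 : ℝ) = ((2 : ℕ) : ℝ) by norm_num, ENNReal.rpow_natCast]

lemma rpow_half_sq (c : ℝ≥0∞) : (c ^ (2 : ℝ)) ^ (1/2 : ℝ) = c := by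
  rw [← ENNReal.rpow_mul]; norm_num

/-- Per-coupling estimate. -/
lemma key_estimate {n m : ℕ}
    (Adag Bα : EuclideanSpace ℝ (Fin n) →L[ℝ] EuclideanSpace ℝ (Fin m))
    (μ ν : Measure (EuclideanSpace ℝ (Fin n)))
    (cpl : Measure (EuclideanSpace ℝ (Fin n) × EuclideanSpace ℝ (Fin n)))
    (h : IsCoupling μ ν cpl) :
    W2 (μ.map Adag) (ν.map Bα) ≤
      ENNReal.ofReal ‖Bα‖ * (∫⁻ z, ENNReal.ofReal (‖z.1 - z.2‖ ^ 2) ∂cpl) ^ (1/2 : ℝ) +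
      ENNReal.ofReal ‖Bα - Adag‖ * (∫⁻ y, ENNReal.ofReal (‖y‖ ^ 2) ∂μ) ^ (1/2 : ℝ) := by
  have hAd : Measurable Adag := Adag.continuous.measurable
  have hBm : Measurable Bα := Bα.continuous.measurable
  have hT : Measurable (Prod.map (Adag : _ → _) (Bα : _ → _)) :=
    (hAd.comp measurable_fst).prodMk (hBm.comp measurable_snd)
  -- the pushed coupling
  set push := cpl.map (Prod.map (Adag : _ → _) (Bα : _ → _)) with hpush
  have hcp : IsCoupling (μ.map Adag) (ν.map Bα) push := by
    constructor
    · rw [hpush, Measure.map_map measurable_fst hT, ← h.1,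
        Measure.map_map hAd measurable_fst]
      rfl
    · rw [hpush, Measure.map_map measurable_snd hT, ← h.2,
        Measure.map_map hBm measurable_snd]
      rfl
  -- bound W2 by the cost of this coupling
  have h1 : W2 (μ.map Adag) (ν.map Bα) ≤
      (∫⁻ z, ENNReal.ofReal (‖z.1 - z.2‖ ^ 2) ∂push) ^ (1/2 : ℝ) := by
    apply ENNReal.rpow_le_rpow _ (by norm_num)
    exact iInf₂_le push hcp
  have hmeas : Measurable fun z : EuclideanSpace ℝ (Fin m) × EuclideanSpace ℝ (Fin m) =>
      ENNReal.ofReal (‖z.1 - z.2‖ ^ 2) := by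
    apply Measurable.ennreal_ofReal
    exact ((measurable_fst.sub measurable_snd).norm.pow_const 2)
  have h2 : (∫⁻ z, ENNReal.ofReal (‖z.1 - z.2‖ ^ 2) ∂push) =
      ∫⁻ w, ENNReal.ofReal (‖Adag w.1 - Bα w.2‖ ^ 2) ∂cpl := by
    rw [hpush, lintegral_map hmeas hT]
    rfl
  -- pointwise bound and Minkowski
  set f : EuclideanSpace ℝ (Fin n) × EuclideanSpace ℝ (Fin n) → ℝ≥0∞ :=
    fun w => ENNReal.ofReal (‖Bα‖ * ‖w.1 - w.2‖) with hf
  set g : EuclideanSpace ℝ (Fin n) × EuclideanSpace ℝ (Fin n) → ℝ≥0∞ :=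
    fun w => ENNReal.ofReal (‖Bα - Adag‖ * ‖w.1‖) with hg
  have hfm : Measurable f :=
    (((measurable_fst.sub measurable_snd).norm.const_mul _)).ennreal_ofReal
  have hgm : Measurable g := ((measurable_fst.norm.const_mul _)).ennreal_ofReal
  have hpt : ∀ w : EuclideanSpace ℝ (Fin n) × EuclideanSpace ℝ (Fin n),
      ENNReal.ofReal (‖Adag w.1 - Bα w.2‖ ^ 2) ≤ (f w + g w) ^ (2 : ℝ) := by
    intro w
    rw [ofReal_sq _ (norm_nonneg _), ← ENNReal.ofReal_add
      (mul_nonneg (norm_nonneg _) (norm_nonneg _))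
      (mul_nonneg (norm_nonneg _) (norm_nonneg _))]
    apply ENNReal.rpow_le_rpow _ (by norm_num)
    apply ENNReal.ofReal_le_ofReal
    have hdecomp : Adag w.1 - Bα w.2 = Bα (w.1 - w.2) + (Adag - Bα) w.1 := by
      simp [map_sub, sub_apply]
    calc ‖Adag w.1 - Bα w.2‖ = ‖Bα (w.1 - w.2) + (Adag - Bα) w.1‖ := by rw [hdecomp]
      _ ≤ ‖Bα (w.1 - w.2)‖ + ‖(Adag - Bα) w.1‖ := norm_add_le _ _
      _ ≤ ‖Bα‖ * ‖w.1 - w.2‖ + ‖Bα - Adag‖ * ‖w.1‖ := by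
          gcongr
          · exact Bα.le_opNorm _
          · calc ‖(Adag - Bα) w.1‖ ≤ ‖Adag - Bα‖ * ‖w.1‖ := (Adag - Bα).le_opNorm _
              _ = ‖Bα - Adag‖ * ‖w.1‖ := by rw [norm_sub_rev]
  have h3 : (∫⁻ w, ENNReal.ofReal (‖Adag w.1 - Bα w.2‖ ^ 2) ∂cpl) ^ (1/2 : ℝ) ≤
      (∫⁻ w, f w ^ (2 : ℝ) ∂cpl) ^ (1/2 : ℝ) + (∫⁻ w, g w ^ (2 : ℝ) ∂cpl) ^ (1/2 : ℝ) := by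
    calc (∫⁻ w, ENNReal.ofReal (‖Adag w.1 - Bα w.2‖ ^ 2) ∂cpl) ^ (1/2 : ℝ)
        ≤ (∫⁻ w, (f w + g w) ^ (2 : ℝ) ∂cpl) ^ (1/2 : ℝ) := by
          apply ENNReal.rpow_le_rpow _ (by norm_num)
          exact lintegral_mono hpt
      _ ≤ _ := ENNReal.lintegral_Lp_add_le hfm.aemeasurable hgm.aemeasurable (by norm_num)
  -- compute the two integrals
  have hfint : (∫⁻ w, f w ^ (2 : ℝ) ∂cpl) ^ (1/2 : ℝ) =
      ENNReal.ofReal ‖Bα‖ * (∫⁻ z, ENNReal.ofReal (‖z.1 - z.2‖ ^ 2) ∂cpl) ^ (1/2 : ℝ) := by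
    have : ∀ w : EuclideanSpace ℝ (Fin n) × EuclideanSpace ℝ (Fin n),
        f w ^ (2 : ℝ) = ENNReal.ofReal ‖Bα‖ ^ (2 : ℝ) *
          ENNReal.ofReal (‖w.1 - w.2‖ ^ 2) := by
      intro w
      show ENNReal.ofReal (‖Bα‖ * ‖w.1 - w.2‖) ^ (2 : ℝ) = _
      rw [ENNReal.ofReal_mul (norm_nonneg _),
        ENNReal.mul_rpow_of_nonneg _ _ (by norm_num), ofReal_sq _ (norm_nonneg _)]
    simp only [this]
    rw [lintegral_const_mul _
      (show Measurable fun w : EuclideanSpace ℝ (Fin n) × EuclideanSpace ℝ (Fin n) =>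
        ENNReal.ofReal (‖w.1 - w.2‖ ^ 2) from
      (((measurable_fst.sub measurable_snd).norm.pow_const 2).ennreal_ofReal)),
      ENNReal.mul_rpow_of_nonneg _ _ (by norm_num), rpow_half_sq]
  have hgint : (∫⁻ w, g w ^ (2 : ℝ) ∂cpl) ^ (1/2 : ℝ) =
      ENNReal.ofReal ‖Bα - Adag‖ * (∫⁻ y, ENNReal.ofReal (‖y‖ ^ 2) ∂μ) ^ (1/2 : ℝ) := by
    have hμ : (∫⁻ w, ENNReal.ofReal (‖w.1‖ ^ 2) ∂cpl) =
        ∫⁻ y, ENNReal.ofReal (‖y‖ ^ 2) ∂μ := by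
      rw [← h.1, lintegral_map (measurable_norm.pow_const 2).ennreal_ofReal measurable_fst]
    have : ∀ w : EuclideanSpace ℝ (Fin n) × EuclideanSpace ℝ (Fin n),
        g w ^ (2 : ℝ) = ENNReal.ofReal ‖Bα - Adag‖ ^ (2 : ℝ) *
          ENNReal.ofReal (‖w.1‖ ^ 2) := by
      intro w
      show ENNReal.ofReal (‖Bα - Adag‖ * ‖w.1‖) ^ (2 : ℝ) = _
      rw [ENNReal.ofReal_mul (norm_nonneg _),
        ENNReal.mul_rpow_of_nonneg _ _ (by norm_num), ofReal_sq _ (norm_nonneg _)]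
    simp only [this]
    rw [lintegral_const_mul _ ((measurable_fst.norm.pow_const 2).ennreal_ofReal),
      ENNReal.mul_rpow_of_nonneg _ _ (by norm_num), rpow_half_sq, hμ]
  calc W2 (μ.map Adag) (ν.map Bα)
      ≤ (∫⁻ z, ENNReal.ofReal (‖z.1 - z.2‖ ^ 2) ∂push) ^ (1/2 : ℝ) := h1
    _ = (∫⁻ w, ENNReal.ofReal (‖Adag w.1 - Bα w.2‖ ^ 2) ∂cpl) ^ (1/2 : ℝ) := by rw [h2]
    _ ≤ (∫⁻ w, f w ^ (2 : ℝ) ∂cpl) ^ (1/2 : ℝ) + (∫⁻ w, g w ^ (2 : ℝ) ∂cpl) ^ (1/2 : ℝ) := h3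
    _ = _ := by rw [hfint, hgint]

/-- Let `A : ℝᵐ → ℝⁿ` be an injective linear map, `α > 0`, and `μ, ν`
probability measures on `ℝⁿ` with finite second moments. With `A† = (AᵀA)⁻¹Aᵀ` and
`B_α = (AᵀA + αI)⁻¹Aᵀ` (inverses via `Ring.inverse`; they exist by injectivity and
positivity), `W₂(A†_#μ, (B_α)_#ν) ≤ ‖B_α‖·W₂(μ,ν) + ‖B_α - A†‖·(∫‖y‖² dμ)^{1/2}`. -/
theorem stmt_13 {m n : ℕ}
    (A : EuclideanSpace ℝ (Fin m) →L[ℝ] EuclideanSpace ℝ (Fin n))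
    (hA : Function.Injective A) (α : ℝ) (hα : 0 < α)
    (μ ν : Measure (EuclideanSpace ℝ (Fin n)))
    [IsProbabilityMeasure μ] [IsProbabilityMeasure ν]
    (hμ2 : ∫⁻ y, ENNReal.ofReal (‖y‖ ^ 2) ∂μ < ⊤)
    (hν2 : ∫⁻ y, ENNReal.ofReal (‖y‖ ^ 2) ∂ν < ⊤)
    (Adag Bα : EuclideanSpace ℝ (Fin n) →L[ℝ] EuclideanSpace ℝ (Fin m))
    (hAdag : Adag = Ring.inverse (adjoint A ∘L A) ∘L adjoint A)
    (hBα : Bα = Ring.inverse (adjoint A ∘L A + α • (1 : EuclideanSpace ℝ (Fin m) →L[ℝ]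
      EuclideanSpace ℝ (Fin m))) ∘L adjoint A) :
    W2 (μ.map Adag) (ν.map Bα) ≤
      ENNReal.ofReal ‖Bα‖ * W2 μ ν +
      ENNReal.ofReal ‖Bα - Adag‖ * (∫⁻ y, ENNReal.ofReal (‖y‖ ^ 2) ∂μ) ^ (1 / 2 : ℝ) := by
  set E := EuclideanSpace ℝ (Fin n)
  -- rewrite the W2 infimum as an infimum over the (nonempty) subtype of couplings
  have hne : Nonempty {cpl : Measure (E × E) // IsCoupling μ ν cpl} := by
    refine ⟨⟨μ.prod ν, ?_, ?_⟩⟩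
    · rw [show (μ.prod ν).map Prod.fst = (μ.prod ν).fst from rfl, Measure.fst_prod]
    · rw [show (μ.prod ν).map Prod.snd = (μ.prod ν).snd from rfl, Measure.snd_prod]
  have hW2 : W2 μ ν = (⨅ p : {cpl : Measure (E × E) // IsCoupling μ ν cpl},
      ∫⁻ z, ENNReal.ofReal (‖z.1 - z.2‖ ^ 2) ∂(p : Measure (E × E))) ^ (1/2 : ℝ) := by
    rw [W2, iInf_subtype']
  have hrpow : (⨅ p : {cpl : Measure (E × E) // IsCoupling μ ν cpl},
      ∫⁻ z, ENNReal.ofReal (‖z.1 - z.2‖ ^ 2) ∂(p : Measure (E × E))) ^ (1/2 : ℝ) =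
      ⨅ p : {cpl : Measure (E × E) // IsCoupling μ ν cpl},
        (∫⁻ z, ENNReal.ofReal (‖z.1 - z.2‖ ^ 2) ∂(p : Measure (E × E))) ^ (1/2 : ℝ) := by
    exact OrderIso.map_iInf (ENNReal.orderIsoRpow (1/2) (by norm_num)) _
  rw [hW2, hrpow, ENNReal.mul_iInf (by simp), ENNReal.iInf_add]
  exact le_iInf fun p => key_estimate Adag Bα μ ν p.1 p.2
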